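/- arXiv:0708.0257 — 2 statements merged into one kernel-verified Lean document; each statement's English description precedes it below -/
import Mathlib

section
/- Let R be a right hereditary ring, N a right R-module, and let C be the class of finitely presented R-modules M such that Hom_R(M,N) = 0 and Ext^1_R(M,N) = 0. Then C is closed under images: if f : A → B is a map with A, B ∈ C, then im(f) ∈ C. -/
/-- `Ext¹_R(M, N) = 0`, expressed concretely: every short exact sequence
`0 → N → X → M → 0` splits. -/
def Ext1Vanishes (R : Type) [Ring R] (M N : Type) [AddCommGroup M] [Module R M]
    [AddCommGroup N] [Module R N] : Prop :=
  ∀ (X : Type) [AddCommGroup X] [Module R X] (i : N →ₗ[R] X) (p : X →ₗ[R] M),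
    Function.Injective i → Function.Surjective p →
    LinearMap.range i = LinearMap.ker p →
    ∃ s : M →ₗ[R] X, p ∘ₗ s = LinearMap.id

/-- A ring is right hereditary if every ideal is projective as a module. -/
def IsRightHereditary (R : Type) [Ring R] : Prop :=
  ∀ I : Ideal R, Module.Projective R I

section Aux
variable {R : Type} [Ring R]

/-- If all submodules of `P` are projective and all ideals of `R` are projective, then
all submodules of `P × R` are projective. -/
lemma proj_sub_prod (hR : IsRightHereditary R) {P : Type} [AddCommGroup P] [Module R P]
    (hP : ∀ S : Submodule R P, Module.Projective R S) (M : Submodule R (P × R)) :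
    Module.Projective R M := by
  set I : Ideal R := M.map (LinearMap.snd R P R) with hI
  have hIproj : Module.Projective R I := hR I
  let g : M →ₗ[R] I := ((LinearMap.snd R P R).domRestrict M).codRestrict I
    (fun x => ⟨x.1, x.2, rfl⟩)
  have hg : Function.Surjective g := by
    rintro ⟨r, x, hx, rfl⟩
    exact ⟨⟨x, hx⟩, rfl⟩
  obtain ⟨h, hh⟩ := Module.projective_lifting_property g LinearMap.id hg
  set S : Submodule R P := M.comap (LinearMap.inl R P R) with hS
  have hSproj : Module.Projective R S := hP S
  let φ : S →ₗ[R] M := ((LinearMap.inl R P R).domRestrict S).codRestrict M (fun x => x.2)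
  let d : M →ₗ[R] M := LinearMap.id - h ∘ₗ g
  have hd2 : ∀ x : M, ((d x : P × R)).2 = 0 := by
    intro x
    have h1 : (g (h (g x)) : R) = (g x : R) := by
      rw [← LinearMap.comp_apply, hh]; rfl
    have h2 : ((h (g x) : M) : P × R).2 = (g x : R) := h1
    simp only [d, LinearMap.sub_apply, LinearMap.id_apply, LinearMap.comp_apply,
      AddSubgroupClass.coe_sub, Prod.snd_sub, h2]
    exact sub_self _
  have hd1 : ∀ x : M, ((d x : P × R).1, (0 : R)) ∈ M := by
    intro x
    have : ((d x : P × R).1, (0:R)) = (d x : P × R) := by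
      ext
      · rfl
      · exact (hd2 x).symm
    rw [this]; exact (d x).2
  let s₁ : M →ₗ[R] S := ((LinearMap.fst R P R ∘ₗ M.subtype) ∘ₗ d).codRestrict S
    (fun x => hd1 x)
  let secmap : M →ₗ[R] S × I := LinearMap.prod s₁ g
  let retr : S × I →ₗ[R] M := φ ∘ₗ LinearMap.fst R S I + h ∘ₗ LinearMap.snd R S I
  have hsplit : retr ∘ₗ secmap = LinearMap.id := by
    refine LinearMap.ext fun x => Subtype.ext ?_
    show ((φ (s₁ x) + h (g x) : M) : P × R) = (x : P × R)
    have h1 : (φ (s₁ x) : P × R) = ((d x : P × R).1, (0:R)) := rfl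
    have h2 : ((d x : P × R).1, (0:R)) = (d x : P × R) := by
      ext
      · rfl
      · exact (hd2 x).symm
    have : (φ (s₁ x) : P × R) = (d x : P × R) := h1.trans h2
    have hfin : (d x) + (h (g x)) = x := by simp [d]
    calc ((φ (s₁ x) + h (g x) : M) : P × R)
        = (φ (s₁ x) : P × R) + (h (g x) : P × R) := rfl
      _ = (d x : P × R) + (h (g x) : P × R) := by rw [this]
      _ = ((d x + h (g x) : M) : P × R) := rfl
      _ = (x : P × R) := by rw [hfin]
  exact Module.Projective.of_split secmap retr hsplit

/-- Over a hereditary ring, every submodule of `Fin n → R` is projective. -/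
lemma proj_sub_pi (hR : IsRightHereditary R) :
    ∀ (n : ℕ) (M : Submodule R (Fin n → R)), Module.Projective R M := by
  intro n
  induction n with
  | zero =>
    intro M
    have : Subsingleton M := ⟨fun a b => Subtype.ext (funext (fun i => i.elim0))⟩
    exact Module.Projective.of_basis (Module.Basis.empty (ι := Empty) M)
  | succ n ih =>
    intro M
    -- transport along the equivalence (Fin (n+1) → R) ≃ₗ (Fin n → R) × R
    let e : (Fin (n+1) → R) ≃ₗ[R] (Fin n → R) × R :=
      (LinearEquiv.funCongrLeft R R (finSumFinEquiv (m := n) (n := 1))) ≪≫ₗ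
        LinearEquiv.sumArrowLequivProdArrow _ _ R R ≪≫ₗ
        (LinearEquiv.refl R (Fin n → R)).prodCongr (LinearEquiv.funUnique (Fin 1) R R)
    have := proj_sub_prod hR ih (M.map e.toLinearMap)
    exact Module.Projective.of_equiv
      (Submodule.equivMapOfInjective e.toLinearMap e.injective M).symm

end Aux

/-- Over a right hereditary ring `R`, the class of finitely presented
modules `M` with `Hom_R(M,N) = 0 = Ext¹_R(M,N)` is closed under images: if
`f : A → B` with `A`, `B` in the class, then `im f` is in the class. -/
theorem stmt1 {R : Type} [Ring R] (hR : IsRightHereditary R)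
    {N : Type} [AddCommGroup N] [Module R N]
    {A B : Type} [AddCommGroup A] [Module R A] [AddCommGroup B] [Module R B]
    (hA : Module.FinitePresentation R A) (hB : Module.FinitePresentation R B)
    (hAhom : ∀ g : A →ₗ[R] N, g = 0) (hAext : Ext1Vanishes R A N)
    (hBhom : ∀ g : B →ₗ[R] N, g = 0) (hBext : Ext1Vanishes R B N)
    (f : A →ₗ[R] B) :
    Module.FinitePresentation R ↥(LinearMap.range f) ∧
    (∀ g : ↥(LinearMap.range f) →ₗ[R] N, g = 0) ∧
    Ext1Vanishes R ↥(LinearMap.range f) N := by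
  classical
  haveI := hA; haveI := hB
  set I : Submodule R B := LinearMap.range f with hIdef
  obtain ⟨n, π, hπ⟩ := Module.Finite.exists_fin' R B
  have hK : (LinearMap.ker π).FG := Module.FinitePresentation.fg_ker π hπ
  set K : Submodule R (Fin n → R) := LinearMap.ker π with hKdef
  set J : Submodule R (Fin n → R) := I.comap π with hJdef
  have hKJ : K ≤ J := by
    intro x hx
    have hx0 : π x = 0 := hx
    show π x ∈ I
    rw [hx0]; exact zero_mem I
  have hJproj : Module.Projective R J := proj_sub_pi hR n J
  let g : J →ₗ[R] I := (π.domRestrict J).codRestrict I (fun x => x.2)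
  have hgval : ∀ j : J, (g j : B) = π (j : Fin n → R) := fun _ => rfl
  have hg : Function.Surjective g := by
    rintro ⟨b, hb⟩
    obtain ⟨v, hv⟩ := hπ b
    have hvJ : v ∈ J := by show π v ∈ I; rw [hv]; exact hb
    exact ⟨⟨v, hvJ⟩, Subtype.ext hv⟩
  -- Finite presentation
  have hIfg : I.FG := by
    have h1 : (⊤ : Submodule R A).FG := Module.Finite.fg_top
    have h2 := h1.map f
    rwa [← LinearMap.range_eq_map] at h2
  have hJfg : J.FG := by
    apply Submodule.fg_of_fg_map_of_fg_inf_ker π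
    · have : Submodule.map π J = I := by
        rw [hJdef, Submodule.map_comap_eq, LinearMap.range_eq_top.mpr hπ, top_inf_eq]
      rw [this]; exact hIfg
    · have : J ⊓ LinearMap.ker π = K := inf_eq_right.mpr hKJ
      rw [this]; exact hK
  haveI : Module.Finite R J := Module.Finite.iff_fg.mpr hJfg
  haveI := hJproj
  haveI : Module.FinitePresentation R J := Module.finitePresentation_of_projective R J
  have hkerg : (LinearMap.ker g).FG := by
    apply Submodule.fg_of_fg_map_of_fg_inf_ker J.subtype
    · have : Submodule.map J.subtype (LinearMap.ker g) = K := by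
        ext x
        simp only [Submodule.mem_map, LinearMap.mem_ker, Submodule.subtype_apply]
        constructor
        · rintro ⟨⟨y, hy⟩, hy0, rfl⟩
          have := congrArg Subtype.val hy0
          exact this
        · intro hx
          refine ⟨⟨x, hKJ hx⟩, ?_, rfl⟩
          exact Subtype.ext hx
      rw [this]; exact hK
    · rw [Submodule.ker_subtype, inf_bot_eq]; exact Submodule.fg_bot
  have hFPI : Module.FinitePresentation R I :=
    Module.finitePresentation_of_surjective g hg hkerg
  refine ⟨hFPI, ?_, ?_⟩
  · -- Hom(I, N) = 0
    intro g0
    have h0 : g0 ∘ₗ f.rangeRestrict = 0 := hAhom _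
    ext ⟨x, hx⟩
    obtain ⟨y, rfl⟩ := hx
    have := LinearMap.congr_fun h0 y
    simp at this; exact this
  · -- Ext¹(I, N) = 0
    intro X _ _ i p hi hp hip
    obtain ⟨t, ht⟩ := Module.projective_lifting_property p g hp
    let inclKJ : K →ₗ[R] J := Submodule.inclusion hKJ
    have htK : ∀ k : K, t (inclKJ k) ∈ LinearMap.range i := by
      intro k
      rw [hip, LinearMap.mem_ker]
      have h1 : p (t (inclKJ k)) = g (inclKJ k) := LinearMap.congr_fun ht _
      rw [h1]
      apply Subtype.ext
      show π ((k : Fin n → R)) = 0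
      exact k.2
    let iE := LinearEquiv.ofInjective i hi
    let u : K →ₗ[R] N := iE.symm.toLinearMap ∘ₗ
      ((t ∘ₗ inclKJ).codRestrict (LinearMap.range i) htK)
    have hiu : ∀ k : K, i (u k) = t (inclKJ k) := by
      intro k
      have h1 : iE (u k) = ⟨t (inclKJ k), htK k⟩ := iE.apply_symm_apply _
      have h2 := congrArg Subtype.val h1
      rwa [LinearEquiv.ofInjective_apply] at h2
    let w : K →ₗ[R] N × (Fin n → R) := LinearMap.prod u (-(K.subtype))
    set W : Submodule R (N × (Fin n → R)) := LinearMap.range w with hWdef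
    let mk : (N × (Fin n → R)) →ₗ[R] _ := W.mkQ
    let iY : N →ₗ[R] (N × (Fin n → R)) ⧸ W := mk ∘ₗ LinearMap.inl R N (Fin n → R)
    have hWker : W ≤ LinearMap.ker (π ∘ₗ LinearMap.snd R N (Fin n → R)) := by
      rintro x ⟨k, rfl⟩
      show π (-(K.subtype k)) = 0
      rw [map_neg, neg_eq_zero]
      exact k.2
    let pY : ((N × (Fin n → R)) ⧸ W) →ₗ[R] B :=
      W.liftQ (π ∘ₗ LinearMap.snd R N (Fin n → R)) hWker
    have hpYmk : ∀ x : N × (Fin n → R), pY (mk x) = π x.2 := fun _ => rfl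
    have hiYinj : Function.Injective iY := by
      rw [injective_iff_map_eq_zero]
      intro a ha
      have hmem : (a, (0 : Fin n → R)) ∈ W := (Submodule.Quotient.mk_eq_zero W).mp ha
      obtain ⟨k, hk⟩ := hmem
      have hk2 : -((k : K) : Fin n → R) = 0 := congrArg Prod.snd hk
      have hk0 : k = 0 := Subtype.ext (by rwa [neg_eq_zero] at hk2)
      have hk1 : u k = a := congrArg Prod.fst hk
      rw [hk0, map_zero] at hk1
      exact hk1.symm
    have hpYsurj : Function.Surjective pY := by
      intro b
      obtain ⟨v, hv⟩ := hπ b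
      exact ⟨mk (0, v), by rw [hpYmk]; exact hv⟩
    have hrange : LinearMap.range iY = LinearMap.ker pY := by
      ext y; constructor
      · rintro ⟨a, rfl⟩
        show pY (mk (a, 0)) = 0
        rw [hpYmk]; exact map_zero π
      · intro hy
        obtain ⟨⟨a, v⟩, rfl⟩ := W.mkQ_surjective y
        have hv : π v = 0 := hy
        refine ⟨a + u ⟨v, hv⟩, ?_⟩
        show mk (a + u ⟨v, hv⟩, 0) = mk (a, v)
        rw [← sub_eq_zero, ← map_sub]
        show Submodule.Quotient.mk _ = 0
        rw [Submodule.Quotient.mk_eq_zero]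
        refine ⟨⟨v, hv⟩, ?_⟩
        show (u ⟨v, hv⟩, -((⟨v, hv⟩ : K) : Fin n → R)) = (a + u ⟨v, hv⟩, 0) - (a, v)
        refine Prod.ext ?_ ?_
        · show u ⟨v, hv⟩ = a + u ⟨v, hv⟩ - a; abel
        · show -v = 0 - v; abel
    obtain ⟨s, hs⟩ := hBext _ iY pY hiYinj hpYsurj hrange
    let iE2 := LinearEquiv.ofInjective iY hiYinj
    have hv'mem : ∀ x, (mk ∘ₗ LinearMap.inr R N (Fin n → R) - s ∘ₗ π) x ∈
        LinearMap.range iY := by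
      intro x
      rw [hrange, LinearMap.mem_ker]
      show pY (mk (0, x) - s (π x)) = 0
      rw [map_sub, hpYmk]
      have h2 : pY (s (π x)) = π x := LinearMap.congr_fun hs (π x)
      rw [h2, sub_self]
    let v' : (Fin n → R) →ₗ[R] N := iE2.symm.toLinearMap ∘ₗ
      ((mk ∘ₗ LinearMap.inr R N (Fin n → R) - s ∘ₗ π).codRestrict (LinearMap.range iY) hv'mem)
    have hiYv' : ∀ x, iY (v' x) = mk (0, x) - s (π x) := by
      intro x
      have h1 : iE2 (v' x) = ⟨_, hv'mem x⟩ := iE2.apply_symm_apply _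
      have h2 := congrArg Subtype.val h1
      rwa [LinearEquiv.ofInjective_apply] at h2
    have hv'K : ∀ k : K, v' ((k : K) : Fin n → R) = u k := by
      intro k
      apply hiYinj
      rw [hiYv']
      have hπk : π ((k : K) : Fin n → R) = 0 := k.2
      rw [hπk, map_zero, sub_zero]
      show mk (0, (k : Fin n → R)) = mk (u k, 0)
      rw [← sub_eq_zero, ← map_sub]
      show Submodule.Quotient.mk _ = 0
      rw [Submodule.Quotient.mk_eq_zero]
      refine ⟨-k, ?_⟩
      show (u (-k), -((-k : K) : Fin n → R)) = (0, (k : Fin n → R)) - (u k, 0)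
      refine Prod.ext ?_ ?_
      · show u (-k) = 0 - u k
        rw [map_neg]; abel
      · show -((-k : K) : Fin n → R) = (k : Fin n → R) - 0
        push_cast
        abel
    let t' : J →ₗ[R] X := t - i ∘ₗ v' ∘ₗ J.subtype
    have hpi : ∀ z, p (i z) = 0 := by
      intro z
      have : i z ∈ LinearMap.ker p := hip ▸ LinearMap.mem_range_self i z
      exact this
    have hpt' : ∀ j, p (t' j) = g j := by
      intro j
      show p (t j - i (v' (J.subtype j))) = g j
      rw [map_sub, hpi, sub_zero]
      exact LinearMap.congr_fun ht j
    have hle : LinearMap.ker g ≤ LinearMap.ker t' := by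
      intro j hj
      have hj0 : g j = 0 := hj
      have hπj : π ((j : J) : Fin n → R) = 0 := congrArg Subtype.val hj0
      have hjK : ((j : J) : Fin n → R) ∈ K := hπj
      show t j - i (v' (J.subtype j)) = 0
      have hincl : inclKJ ⟨_, hjK⟩ = j := Subtype.ext rfl
      rw [show J.subtype j = ((⟨_, hjK⟩ : K) : Fin n → R) from rfl, hv'K, hiu, hincl, sub_self]
    let e := g.quotKerEquivOfSurjective hg
    let s₀ : I →ₗ[R] X := ((LinearMap.ker g).liftQ t' hle) ∘ₗ e.symm.toLinearMap
    refine ⟨s₀, ?_⟩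
    refine LinearMap.ext fun x => ?_
    obtain ⟨q, hq⟩ := (LinearMap.ker g).mkQ_surjective (e.symm x)
    have hgq : g q = x := by
      have h1 : e ((LinearMap.ker g).mkQ q) = e (e.symm x) := congrArg e hq
      rw [e.apply_symm_apply] at h1
      have h2 : e ((LinearMap.ker g).mkQ q) = g q := by
        simp [e, LinearMap.quotKerEquivOfSurjective]
      rw [h2] at h1
      exact h1
    show p (s₀ x) = x
    have hs₀ : s₀ x = t' q := by
      show ((LinearMap.ker g).liftQ t' hle) (e.symm x) = t' q
      rw [← hq]
      exact Submodule.liftQ_apply _ t' q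
    rw [hs₀, hpt', hgq]
end

section
/- Let R be a ring, R' an R-algebra, and let K be an R-module with a finite filtration 0 = K₀ ⊆ K₁ ⊆ ⋯ ⊆ K_n = K such that each quotient K_{i+1}/K_i satisfies: (K_{i+1}/K_i) ⊗_R R' is a projective R'-module and Tor₁^R(K_{i+1}/K_i, R') = 0. Then K ⊗_R R' ≅ ⊕_{i=0}^{n-1} (K_{i+1}/K_i) ⊗_R R' as R'-modules, and K ⊗_R R' is projective. -/
open CategoryTheory TensorProduct

/-- `Tor₁^R(M, N)`, as an object of `ModuleCat R`. -/
noncomputable def tor1 (R : Type) [CommRing R] (M N : Type) [AddCommGroup M] [Module R M]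
    [AddCommGroup N] [Module R N] : ModuleCat R :=
  ((Tor (ModuleCat R) 1).obj (ModuleCat.of R M)).obj (ModuleCat.of R N)

section CatPart

open CategoryTheory.Limits CategoryTheory.MonoidalCategory

variable {R : Type} [CommRing R]

lemma aux_mono_whiskerRight (S : ShortComplex (ModuleCat R)) (hS : S.ShortExact)
    (N : ModuleCat R)
    (htor : Subsingleton (((Tor (ModuleCat R) 1).obj S.X₃).obj N)) :
    Mono (((tensoringLeft (ModuleCat R)).map S.f).app N) := by
  letI P := CategoryTheory.projectiveResolution N
  letI T := tensoringLeft (ModuleCat R)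
  let Φ : ∀ {X Y : ModuleCat R} (h : X ⟶ Y),
      ((T.obj X).mapHomologicalComplex (ComplexShape.down ℕ)).obj P.complex ⟶
      ((T.obj Y).mapHomologicalComplex (ComplexShape.down ℕ)).obj P.complex :=
    fun h => (NatTrans.mapHomologicalComplex (T.map h) _).app P.complex
  have hzero : Φ S.f ≫ Φ S.g = 0 := by
    ext n : 1
    show (S.f ▷ _) ≫ (S.g ▷ _) = 0
    rw [← MonoidalCategory.comp_whiskerRight, S.zero, MonoidalPreadditive.zero_whiskerRight]
  let S₂ : ShortComplex (HomologicalComplex (ModuleCat R) (ComplexShape.down ℕ)) :=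
    ShortComplex.mk (Φ S.f) (Φ S.g) hzero
  have hfinj : Function.Injective S.f := hS.moduleCat_injective_f
  have hgsurj : Function.Surjective S.g := hS.moduleCat_surjective_g
  have hfg : Function.Exact S.f S.g :=
    (ShortComplex.ShortExact.moduleCat_exact_iff_function_exact S).mp hS.exact
  have hS₂ : S₂.ShortExact := by
    apply HomologicalComplex.shortExact_of_degreewise_shortExact
    intro i
    haveI : Module.Projective R (P.complex.X i) :=
      (IsProjective.iff_projective (P.complex.X i)).mpr (P.projective i)
    haveI : Module.Flat R (P.complex.X i) := inferInstance
    have h1 : Function.Injective (LinearMap.rTensor (P.complex.X i) S.f.hom) :=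
      Module.Flat.rTensor_preserves_injective_linearMap S.f.hom hfinj
    have h2 : Function.Surjective (LinearMap.rTensor (P.complex.X i) S.g.hom) :=
      LinearMap.rTensor_surjective _ hgsurj
    have h3 : Function.Exact (LinearMap.rTensor (P.complex.X i) S.f.hom)
        (LinearMap.rTensor (P.complex.X i) S.g.hom) := rTensor_exact _ hfg hgsurj
    exact
      { exact := (ShortComplex.ShortExact.moduleCat_exact_iff_function_exact _).mpr h3
        mono_f := (ModuleCat.mono_iff_injective _).mpr h1
        epi_g := (ModuleCat.epi_iff_surjective _).mpr h2 }
  -- H₁ of the third complex is zero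
  have hz : IsZero (HomologicalComplex.homology S₂.X₃ 1) :=
    (ModuleCat.isZero_of_subsingleton (((Tor (ModuleCat R) 1).obj S.X₃).obj N)).of_iso
      (P.isoLeftDerivedObj (T.obj S.X₃) 1).symm
  have hrel : (ComplexShape.down ℕ).Rel 1 0 := by simp
  have hex := hS₂.homology_exact₁ 1 0 hrel
  have hδ : hS₂.δ 1 0 hrel = 0 := hz.eq_of_src _ _
  haveI hmono : Mono (HomologicalComplex.homologyMap S₂.f 0) := hex.mono_g hδ
  -- the comparison maps μ X
  haveI : ∀ X : ModuleCat R, PreservesFiniteColimits (T.obj X) := fun X =>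
    inferInstanceAs (PreservesFiniteColimits (tensorLeft X))
  let μ : ∀ X : ModuleCat R,
      ((((T.obj X).mapHomologicalComplex (ComplexShape.down ℕ)).obj P.complex).homology 0 ⟶
        (T.obj X).obj N) :=
    fun X => (ChainComplex.isoHomologyι₀ _).hom ≫ P.fromLeftDerivedZero' (T.obj X)
  haveI : ∀ X, IsIso (μ X) := fun X => by
    dsimp only [μ]
    infer_instance
  have hnat : ∀ {X Y : ModuleCat R} (h : X ⟶ Y),
      HomologicalComplex.homologyMap (Φ h) 0 ≫ μ Y = μ X ≫ (T.map h).app N := by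
    intro X Y h
    have hsq : HomologicalComplex.opcyclesMap (Φ h) 0 ≫ P.fromLeftDerivedZero' (T.obj Y) =
        P.fromLeftDerivedZero' (T.obj X) ≫ (T.map h).app N := by
      rw [← cancel_epi (HomologicalComplex.pOpcycles _ 0),
        HomologicalComplex.p_opcyclesMap_assoc]
      simp only [ProjectiveResolution.pOpcycles_comp_fromLeftDerivedZero',
        ProjectiveResolution.pOpcycles_comp_fromLeftDerivedZero'_assoc]
      exact ((T.map h).naturality (P.π.f 0)).symm
    dsimp only [μ]
    rw [HomologicalComplex.isoHomologyι_hom, HomologicalComplex.isoHomologyι_hom,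
      HomologicalComplex.homologyι_naturality_assoc, hsq, Category.assoc]
  have key := hnat S.f
  have heq : (T.map S.f).app N =
      inv (μ S.X₁) ≫ HomologicalComplex.homologyMap (Φ S.f) 0 ≫ μ S.X₂ := by
    rw [key, IsIso.inv_hom_id_assoc]
  rw [heq]
  haveI : Mono (HomologicalComplex.homologyMap (Φ S.f) 0) := hmono
  infer_instance

lemma lTensor_injective_of_tor1 {A B C' N : Type}
    [AddCommGroup A] [Module R A] [AddCommGroup B] [Module R B]
    [AddCommGroup C'] [Module R C'] [AddCommGroup N] [Module R N]
    (f : A →ₗ[R] B) (g : B →ₗ[R] C') (hf : Function.Injective f)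
    (hg : Function.Surjective g) (hfg : Function.Exact f g)
    (htor : Subsingleton (tor1 R C' N)) :
    Function.Injective (f.lTensor N) := by
  have hr : Function.Injective (f.rTensor N) := by
    let S : ShortComplex (ModuleCat R) := ShortComplex.mk
      (ModuleCat.ofHom f) (ModuleCat.ofHom g)
      (by ext x; exact hfg.apply_apply_eq_zero x)
    have hS : S.ShortExact :=
      { exact := (ShortComplex.ShortExact.moduleCat_exact_iff_function_exact S).mpr hfg
        mono_f := (ModuleCat.mono_iff_injective _).mpr hf
        epi_g := (ModuleCat.epi_iff_surjective _).mpr hg }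
    have hm := aux_mono_whiskerRight S hS (ModuleCat.of R N) htor
    exact (ModuleCat.mono_iff_injective _).mp hm
  have heq : f.lTensor N = ((TensorProduct.comm R B N).toLinearMap.comp
      ((f.rTensor N).comp (TensorProduct.comm R N A).toLinearMap)) := by
    ext n a
    simp
  rw [heq]
  simp only [LinearMap.coe_comp, LinearEquiv.coe_coe]
  exact (TensorProduct.comm R B N).injective.comp
    (hr.comp (TensorProduct.comm R N A).injective)

end CatPart

section Split

lemma step_equiv {R R' : Type} [CommRing R] [Ring R'] [Algebra R R']
    {A B Q : Type} [AddCommGroup A] [Module R A] [AddCommGroup B] [Module R B]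
    [AddCommGroup Q] [Module R Q]
    (f : A →ₗ[R] B) (g : B →ₗ[R] Q) (hf : Function.Injective f)
    (hg : Function.Surjective g) (hfg : Function.Exact f g)
    (hproj : Module.Projective R' (R' ⊗[R] Q))
    (htor : Subsingleton (tor1 R Q R')) :
    Nonempty ((R' ⊗[R] B) ≃ₗ[R'] (R' ⊗[R] A) × (R' ⊗[R] Q)) := by
  have hfinj : Function.Injective (f.baseChange R') :=
    lTensor_injective_of_tor1 f g hf hg hfg htor
  have hgsurj : Function.Surjective (g.baseChange R') :=
    LinearMap.lTensor_surjective R' hg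
  have hexact : Function.Exact (f.baseChange R') (g.baseChange R') :=
    lTensor_exact R' hfg hg
  obtain ⟨l, hl⟩ := Module.projective_lifting_property (g.baseChange R') LinearMap.id hgsurj
  exact ⟨(hexact.splitSurjectiveEquiv hfinj ⟨l, hl⟩).1⟩

/-- `Fin.snoc` as a linear equivalence. -/
noncomputable def finSnocLinearEquiv {S : Type} [Semiring S] {m : ℕ} (φ : Fin (m + 1) → Type)
    [∀ j, AddCommMonoid (φ j)] [∀ j, Module S (φ j)] :
    (((j : Fin m) → φ j.castSucc) × φ (Fin.last m)) ≃ₗ[S] ((j : Fin (m + 1)) → φ j) :=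
  LinearEquiv.ofLinear
    (LinearMap.pi fun j => Fin.lastCases (LinearMap.snd S _ _)
      (fun k => (LinearMap.proj k).comp (LinearMap.fst S _ _)) j)
    (LinearMap.prod (LinearMap.pi fun j => LinearMap.proj j.castSucc)
      (LinearMap.proj (Fin.last m)))
    (by
      apply LinearMap.ext; intro x
      funext j
      refine Fin.lastCases ?_ ?_ j <;>
        simp [Fin.lastCases_last, Fin.lastCases_castSucc])
    (by
      apply LinearMap.ext; intro x
      refine Prod.ext ?_ ?_
      · funext j
        simp [Fin.lastCases_last, Fin.lastCases_castSucc]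
      · simp [Fin.lastCases_last, Fin.lastCases_castSucc])

end Split


/-- Let `R'` be an `R`-algebra and `K` an `R`-module with a finite
filtration `0 = K₀ ⊆ K₁ ⊆ ⋯ ⊆ Kₙ = K` such that for each `i`, `(Kᵢ₊₁/Kᵢ) ⊗_R R'` is a
projective `R'`-module and `Tor₁^R(Kᵢ₊₁/Kᵢ, R') = 0`.  Then
`K ⊗_R R' ≅ ⊕ᵢ (Kᵢ₊₁/Kᵢ) ⊗_R R'` as `R'`-modules, and `K ⊗_R R'` is projective. -/
theorem stmt13 {R R' : Type} [CommRing R] [Ring R'] [Algebra R R']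
    {K : Type} [AddCommGroup K] [Module R K]
    (n : ℕ) (F : ℕ → Submodule R K) (hmono : Monotone F)
    (h0 : F 0 = ⊥) (hn : F n = ⊤)
    (hproj : ∀ i < n, Module.Projective R'
      (R' ⊗[R] (↥(F (i + 1)) ⧸ Submodule.comap (F (i + 1)).subtype (F i))))
    (htor : ∀ i < n, Subsingleton
      ↥(tor1 R (↥(F (i + 1)) ⧸ Submodule.comap (F (i + 1)).subtype (F i)) R')) :
    Nonempty ((R' ⊗[R] K) ≃ₗ[R'] ((i : Fin n) →
      R' ⊗[R] (↥(F (i.1 + 1)) ⧸ Submodule.comap (F (i.1 + 1)).subtype (F i.1)))) ∧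
    Module.Projective R' (R' ⊗[R] K) := by
  have main : ∀ i, i ≤ n →
      Nonempty ((R' ⊗[R] ↥(F i)) ≃ₗ[R'] ((j : Fin i) →
        R' ⊗[R] (↥(F (j.1 + 1)) ⧸ Submodule.comap (F (j.1 + 1)).subtype (F j.1))))
      ∧ Module.Projective R' (R' ⊗[R] ↥(F i)) := by
    intro i
    induction i with
    | zero =>
      intro _
      haveI hsub : Subsingleton ↥(F 0) := by rw [h0]; infer_instance
      haveI : Subsingleton (R' ⊗[R] ↥(F 0)) := by infer_instance
      exact ⟨⟨LinearEquiv.ofLinear 0 0 (LinearMap.ext fun x => Subsingleton.elim _ _)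
        (LinearMap.ext fun x => Subsingleton.elim _ _)⟩, inferInstance⟩
    | succ i ih =>
      intro hi1
      have hi : i < n := hi1
      obtain ⟨⟨e⟩, hp⟩ := ih (le_of_lt hi)
      have hexact : Function.Exact (Submodule.inclusion (hmono (Nat.le_succ i)))
          (Submodule.comap (F (i+1)).subtype (F i)).mkQ := by
        rw [LinearMap.exact_iff, Submodule.ker_mkQ, Submodule.range_inclusion]
      obtain ⟨e2⟩ := step_equiv (R' := R') (Submodule.inclusion (hmono (Nat.le_succ i)))
        (Submodule.comap (F (i+1)).subtype (F i)).mkQ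
        (Submodule.inclusion_injective _) (Submodule.mkQ_surjective _)
        hexact (hproj i hi) (htor i hi)
      haveI := hproj i hi
      haveI := hp
      refine ⟨⟨e2.trans ((e.prodCongr (LinearEquiv.refl R' _)).trans
        (finSnocLinearEquiv (S := R') (fun j =>
          R' ⊗[R] (↥(F (j.1 + 1)) ⧸ Submodule.comap (F (j.1 + 1)).subtype (F j.1)))))⟩,
        Module.Projective.of_equiv e2.symm⟩
  obtain ⟨⟨e⟩, hp⟩ := main n le_rfl
  have etop : K ≃ₗ[R] ↥(F n) := by rw [hn]; exact Submodule.topEquiv.symm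
  have ebc : (R' ⊗[R] K) ≃ₗ[R'] (R' ⊗[R] ↥(F n)) :=
    LinearEquiv.ofLinear (etop.toLinearMap.baseChange R') (etop.symm.toLinearMap.baseChange R')
      (by ext x; simp) (by ext x; simp)
  haveI := hp
  exact ⟨⟨ebc.trans e⟩, Module.Projective.of_equiv ebc.symm⟩
end
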